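/- Let k be a field, h a finite-dimensional Lie algebra over k, and M a finite-dimensional Lie module over h with action (x,u) ↦ x·u. Let φ : h × M → h be bilinear and a 1-cocycle: [x, φ(y,u)] + φ(x, y·u) − [y, φ(x,u)] − φ(y, x·u) − φ([x,y], u) = 0, and let θ_m : M × M → M be an alternating bilinear map with φ(x,u₁)·u₂ − φ(x,u₂)·u₁ = x·θ_m(u₁,u₂) − θ_m(x·u₁,u₂) − θ_m(u₁,x·u₂) for all x,u₁,u₂. Let σ : M → h be linear, and set dσ(x,u) = [x,σ(u)] − σ(x·u) and δσ(u₁,u₂) = σ(u₁)·u₂ − σ(u₂)·u₁. Define q_σ(x)(u₁,u₂) = dσ(φ(x,u₁),u₂) − dσ(φ(x,u₂),u₁) + φ(dσ(x,u₁),u₂) − φ(dσ(x,u₂),u₁) + dσ(dσ(x,u₁),u₂) − dσ(dσ(x,u₂),u₁) − φ(x, δσ(u₁,u₂)) − dσ(x, θ_m(u₁,u₂)) − dσ(x, δσ(u₁,u₂)), and define Φ : M × M → h by Φ(u₁,u₂) = [φ(σ(u₁),u₂) − φ(σ(u₂),u₁)] + [σ(u₁),σ(u₂)] − σ(σ(u₁)·u₂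 − σ(u₂)·u₁) − σ(θ_m(u₁,u₂)). Then q_σ is the coboundary of Φ: for all x ∈ h and u₁,u₂ ∈ M, q_σ(x)(u₁,u₂) = [x, Φ(u₁,u₂)] − Φ(x·u₁, u₂) − Φ(u₁, x·u₂). -/
import Mathlib


/-- second part of Lemma L2: With `φ` a 1-cocycle, `θ_m` alternating with
`δφ = dθ_m`, and `σ : M → h` linear, the 1-cochain `q_σ` is the coboundary of
`Φ = φ₁ + φ₂ − φ₃ − φ₄`: `q_σ(x)(u₁,u₂) = [x, Φ(u₁,u₂)] − Φ(x·u₁,u₂) − Φ(u₁,x·u₂)`. -/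
theorem q_sigma_is_coboundary
    {k : Type*} [Field k] {h : Type*} [LieRing h] [LieAlgebra k h]
    [FiniteDimensional k h]
    {M : Type*} [AddCommGroup M] [Module k M] [LieRingModule h M] [LieModule k h M]
    [FiniteDimensional k M]
    (φ : h →ₗ[k] M →ₗ[k] h)
    (hcocycle : ∀ (x y : h) (u : M),
      ⁅x, φ y u⁆ + φ x ⁅y, u⁆ - ⁅y, φ x u⁆ - φ y ⁅x, u⁆ - φ ⁅x, y⁆ u = 0)
    (θm : M →ₗ[k] M →ₗ[k] M)
    (halt : ∀ u : M, θm u u = 0)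
    (hδφ : ∀ (x : h) (u₁ u₂ : M),
      ⁅φ x u₁, u₂⁆ - ⁅φ x u₂, u₁⁆
        = ⁅x, θm u₁ u₂⁆ - θm ⁅x, u₁⁆ u₂ - θm u₁ ⁅x, u₂⁆)
    (σ : M →ₗ[k] h)
    (dσ : h → M → h) (hdσ : ∀ (x : h) (u : M), dσ x u = ⁅x, σ u⁆ - σ ⁅x, u⁆)
    (δσ : M → M → M) (hδσ : ∀ u₁ u₂ : M, δσ u₁ u₂ = ⁅σ u₁, u₂⁆ - ⁅σ u₂, u₁⁆)
    (qσ : h → M → M → h)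
    (hqσ : ∀ (x : h) (u₁ u₂ : M),
      qσ x u₁ u₂ =
        dσ (φ x u₁) u₂ - dσ (φ x u₂) u₁
          + φ (dσ x u₁) u₂ - φ (dσ x u₂) u₁
          + dσ (dσ x u₁) u₂ - dσ (dσ x u₂) u₁
          - φ x (δσ u₁ u₂) - dσ x (θm u₁ u₂) - dσ x (δσ u₁ u₂))
    (Φ : M → M → h)
    (hΦ : ∀ u₁ u₂ : M,
      Φ u₁ u₂ = (φ (σ u₁) u₂ - φ (σ u₂) u₁) + ⁅σ u₁, σ u₂⁆
        - σ (⁅σ u₁, u₂⁆ - ⁅σ u₂, u₁⁆) - σ (θm u₁ u₂)) :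
    ∀ (x : h) (u₁ u₂ : M),
      qσ x u₁ u₂ = ⁅x, Φ u₁ u₂⁆ - Φ ⁅x, u₁⁆ u₂ - Φ u₁ ⁅x, u₂⁆ := by
  intro x u₁ u₂
  have sd : σ ⁅φ x u₁, u₂⁆ - σ ⁅φ x u₂, u₁⁆
      = σ ⁅x, θm u₁ u₂⁆ - σ (θm ⁅x, u₁⁆ u₂) - σ (θm u₁ ⁅x, u₂⁆) := by
    have := congrArg σ (hδφ x u₁ u₂)
    simpa [map_sub] using this
  have sl1 : σ ⁅⁅x, σ u₁⁆, u₂⁆ = σ ⁅x, ⁅σ u₁, u₂⁆⁆ - σ ⁅σ u₁, ⁅x, u₂⁆⁆ := by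
    rw [← map_sub, lie_lie]
  have sl2 : σ ⁅⁅x, σ u₂⁆, u₁⁆ = σ ⁅x, ⁅σ u₂, u₁⁆⁆ - σ ⁅σ u₂, ⁅x, u₁⁆⁆ := by
    rw [← map_sub, lie_lie]
  simp only [hqσ, hΦ, hdσ, hδσ, map_sub, map_add, LinearMap.sub_apply,
    LinearMap.add_apply, lie_sub, sub_lie, lie_add, add_lie]
  linear_combination (norm := module)
    - hcocycle x (σ u₁) u₂ + hcocycle x (σ u₂) u₁ + lie_lie x (σ u₁) (σ u₂)
    - sd - sl1 + sl2
    - lie_skew (φ x u₁) (σ u₂) + lie_skew (φ x u₂) (σ u₁)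
    + lie_skew ⁅x, σ u₂⁆ (σ u₁) - lie_skew (σ ⁅x, u₂⁆) (σ u₁)
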